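/- Let η₁, ..., ηₙ be vectors in a real inner product space with ⟨ηᵢ, ηⱼ⟩ = κ for i ≠ j (κ ≠ 0), ‖ηᵢ‖² ≠ κ for all i, and Σ_{i=1}^n ηᵢ/(‖ηᵢ‖² - κ) = 0. Then Σ_{i=1}^n 1/(‖ηᵢ‖² - κ) = -1/κ. -/

import Mathlib

open RealInnerProductSpace

/-- If η₁, ..., ηₙ have pairwise inner products κ ≠ 0, ‖ηᵢ‖² ≠ κ for all i,
and Σ ηᵢ/(‖ηᵢ‖² - κ) = 0, then Σ 1/(‖ηᵢ‖² - κ) = -1/κ. -/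
theorem stmt5 {E : Type*} [NormedAddCommGroup E] [InnerProductSpace ℝ E]
    {n : ℕ} (hn : 0 < n) (η : Fin n → E) (κ : ℝ) (hκ : κ ≠ 0)
    (hinner : ∀ i j, i ≠ j → ⟪η i, η j⟫ = κ)
    (hnorm : ∀ i, ‖η i‖ ^ 2 ≠ κ)
    (hsum : ∑ i, (‖η i‖ ^ 2 - κ)⁻¹ • η i = 0) :
    ∑ i, (‖η i‖ ^ 2 - κ)⁻¹ = -1 / κ := by
  set j : Fin n := ⟨0, hn⟩
  have h0 : ∑ i, (‖η i‖ ^ 2 - κ)⁻¹ * ⟪η j, η i⟫ = 0 := by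
    have := congrArg (fun v => ⟪η j, v⟫) hsum
    simpa [inner_sum, real_inner_smul_right] using this
  have h1 : ∀ i, (‖η i‖ ^ 2 - κ)⁻¹ * ⟪η j, η i⟫
      = (‖η i‖ ^ 2 - κ)⁻¹ * κ + if i = j then 1 else 0 := by
    intro i
    by_cases h : i = j
    · have hne : ‖η j‖ ^ 2 - κ ≠ 0 := sub_ne_zero.mpr (hnorm j)
      rw [h, real_inner_self_eq_norm_sq, if_pos rfl]
      field_simp
      ring
    · simp [h, hinner j i (Ne.symm h), mul_comm]
  rw [Finset.sum_congr rfl (fun i _ => h1 i), Finset.sum_add_distrib,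
    ← Finset.sum_mul] at h0
  simp only [Finset.sum_ite_eq', Finset.mem_univ, if_true] at h0
  have hs : ∑ i, (‖η i‖ ^ 2 - κ)⁻¹ = -1 / κ := by
    field_simp at h0 ⊢
    linarith [h0]
  exact hs
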